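/- arXiv:1012.5447 — 2 statements merged into one kernel-verified Lean document; each statement's English description precedes it below -/
import Mathlib

section
/- If B = [b_1, ..., b_n] is the non-increasing imbalance sequence of an r-digraph, then for every k with 1 ≤ k ≤ n, the sum of squares b_1² + ... + b_k² is at most the sum (2rn − 2rk − b_1)² + ... + (2rn − 2rk − b_k)², with equality when k = n. -/
open Finset

/-- An `r`-digraph on `n` vertices: `A i j` is the number of arcs from `i` to `j`;
no loops, and at most `r` arcs (both directions counted) between any two distinct vertices. -/
def IsRDigraph (n r : ℕ) (A : Fin n → Fin n → ℕ) : Prop :=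
  (∀ i, A i i = 0) ∧ ∀ i j, i ≠ j → A i j + A j i ≤ r

/-- Imbalance of a vertex: outdegree minus indegree. -/
def imbalance {n : ℕ} (A : Fin n → Fin n → ℕ) (v : Fin n) : ℤ :=
  (∑ j, (A v j : ℤ)) - ∑ j, (A j v : ℤ)

/-- `b` lists the vertex imbalances of `A` (in some order given by a permutation). -/
def IsImbalanceSeq (n r : ℕ) (A : Fin n → Fin n → ℕ) (b : Fin n → ℤ) : Prop :=
  IsRDigraph n r A ∧ ∃ σ : Equiv.Perm (Fin n), ∀ i, b i = imbalance A (σ i)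

/-- Sum of the first `k` entries of `b`. -/
def psum {n : ℕ} (b : Fin n → ℤ) (k : ℕ) : ℤ :=
  ∑ i ∈ Finset.univ.filter (fun i : Fin n => (i : ℕ) < k), b i

lemma sum_imbalance_le {n r : ℕ} {A : Fin n → Fin n → ℕ} (h : IsRDigraph n r A)
    (S : Finset (Fin n)) :
    ∑ v ∈ S, imbalance A v ≤ (r : ℤ) * S.card * Sᶜ.card := by
  have key : ∑ v ∈ S, imbalance A v
      = ∑ v ∈ S, ∑ j ∈ Sᶜ, ((A v j : ℤ) - (A j v : ℤ)) := by
    have hsplit : ∀ v : Fin n, imbalance A v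
        = ∑ j ∈ S, ((A v j : ℤ) - (A j v : ℤ)) + ∑ j ∈ Sᶜ, ((A v j : ℤ) - (A j v : ℤ)) := by
      intro v
      rw [Finset.sum_add_sum_compl S (fun j => ((A v j : ℤ) - (A j v : ℤ)))]
      unfold imbalance
      rw [Finset.sum_sub_distrib]
    rw [Finset.sum_congr rfl (fun v _ => hsplit v), Finset.sum_add_distrib]
    have hzero : ∑ v ∈ S, ∑ j ∈ S, ((A v j : ℤ) - (A j v : ℤ)) = 0 := by
      simp only [Finset.sum_sub_distrib]
      rw [Finset.sum_comm (s := S) (t := S) (f := fun v j => (A j v : ℤ))]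
      ring
    rw [hzero, zero_add]
  rw [key]
  calc ∑ v ∈ S, ∑ j ∈ Sᶜ, ((A v j : ℤ) - (A j v : ℤ))
      ≤ ∑ v ∈ S, ∑ j ∈ Sᶜ, (r : ℤ) := by
        apply Finset.sum_le_sum
        intro v hv
        apply Finset.sum_le_sum
        intro j hj
        have hne : v ≠ j := by
          intro hvj; subst hvj
          exact (Finset.mem_compl.mp hj) hv
        have := h.2 v j hne
        have h1 : (A v j : ℤ) + (A j v : ℤ) ≤ (r : ℤ) := by exact_mod_cast this
        have h2 : (0 : ℤ) ≤ (A j v : ℤ) := Int.natCast_nonneg _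
        linarith
    _ = (r : ℤ) * S.card * Sᶜ.card := by
        simp [Finset.sum_const, mul_comm, mul_assoc, mul_left_comm]

lemma card_filter_lt_fin (n k : ℕ) (h : k ≤ n) :
    (Finset.univ.filter (fun i : Fin n => (i : ℕ) < k)).card = k := by
  have := Fin.sum_univ_eq_sum_range (fun i => if i < k then 1 else 0) n
  rw [Finset.card_filter, this, Finset.sum_ite, Finset.sum_const, Finset.sum_const]
  have : Finset.filter (fun x => x < k) (Finset.range n) = Finset.range k := by
    ext x; simp; omega
  simp [this]

/-- For a non-increasing imbalance sequence of an r-digraph,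
$\sum_{i=1}^k b_i^2 \le \sum_{i=1}^k (2rn-2rk-b_i)^2$ for all k, with equality at k = n. -/
theorem stmt4 (n r : ℕ) (hn : 1 ≤ n) (hr : 1 ≤ r) (b : Fin n → ℤ) (hanti : Antitone b)
    (hA : ∃ A : Fin n → Fin n → ℕ, IsImbalanceSeq n r A b) :
    (∀ k : ℕ, 1 ≤ k → k ≤ n →
      (∑ i ∈ Finset.univ.filter (fun i : Fin n => (i : ℕ) < k), (b i) ^ 2) ≤
        ∑ i ∈ Finset.univ.filter (fun i : Fin n => (i : ℕ) < k),
          (2 * (r : ℤ) * n - 2 * (r : ℤ) * k - b i) ^ 2) ∧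
    (∑ i : Fin n, (b i) ^ 2) =
      ∑ i : Fin n, (2 * (r : ℤ) * n - 2 * (r : ℤ) * n - b i) ^ 2 := by
  obtain ⟨A, hDG, σ, hσ⟩ := hA
  constructor
  · intro k hk1 hkn
    set T : Finset (Fin n) := Finset.univ.filter (fun i : Fin n => (i : ℕ) < k) with hT
    have hTcard : T.card = k := card_filter_lt_fin n k hkn
    set S : Finset (Fin n) := T.image σ with hS
    have hScard : S.card = k := by
      rw [hS, Finset.card_image_of_injective _ σ.injective, hTcard]
    have hSsum : ∑ i ∈ T, b i = ∑ v ∈ S, imbalance A v := by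
      rw [hS, Finset.sum_image (fun x _ y _ h => σ.injective h)]
      exact Finset.sum_congr rfl (fun i _ => hσ i)
    have hcompl : (Sᶜ.card : ℤ) = (n : ℤ) - k := by
      rw [Finset.card_compl, hScard, Fintype.card_fin]
      push_cast [Nat.cast_sub hkn]
      ring
    have hbound : ∑ i ∈ T, b i ≤ (r : ℤ) * k * ((n : ℤ) - k) := by
      rw [hSsum]
      calc ∑ v ∈ S, imbalance A v ≤ (r : ℤ) * S.card * Sᶜ.card := sum_imbalance_le hDG S
        _ = (r : ℤ) * k * ((n : ℤ) - k) := by rw [hScard, hcompl]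
    set c : ℤ := 2 * (r : ℤ) * n - 2 * (r : ℤ) * k with hc
    have hc0 : 0 ≤ c := by
      have : (k : ℤ) ≤ n := by exact_mod_cast hkn
      have : (0:ℤ) ≤ (r:ℤ) := Int.natCast_nonneg _
      nlinarith [Int.natCast_nonneg r, (show (k:ℤ) ≤ n by exact_mod_cast hkn)]
    have hexp : ∑ i ∈ T, (c - b i) ^ 2
        = ∑ i ∈ T, (b i) ^ 2 + ((T.card : ℤ) * c ^ 2 - 2 * c * ∑ i ∈ T, b i) := by
      have : ∀ i ∈ T, (c - b i) ^ 2 = (b i) ^ 2 + (c ^ 2 - 2 * c * b i) := by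
        intro i _; ring
      rw [Finset.sum_congr rfl this]
      simp only [Finset.sum_add_distrib, Finset.sum_sub_distrib, Finset.sum_const,
        nsmul_eq_mul, Finset.mul_sum]
    rw [hexp, hTcard]
    have hck : 2 * c * ∑ i ∈ T, b i ≤ (k : ℤ) * c ^ 2 := by
      have h1 : 2 * c * ∑ i ∈ T, b i ≤ 2 * c * ((r : ℤ) * k * ((n : ℤ) - k)) := by
        apply mul_le_mul_of_nonneg_left hbound
        positivity
      have h2 : 2 * c * ((r : ℤ) * k * ((n : ℤ) - k)) = (k : ℤ) * c ^ 2 := by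
        rw [hc]; ring
      linarith
    linarith
  · apply Finset.sum_congr rfl
    intro i _
    ring
end

section
/- A sequence of integers b_1 ≥ b_2 ≥ ... ≥ b_n is the imbalance sequence of a simple digraph (an orientation with at most one arc in each direction between any two vertices, i.e., the case r = 1) if and only if ∑_{i=1}^k b_i ≤ k(n−k) for all 1 ≤ k ≤ n, with equality when k = n. -/
open Finset

set_option maxHeartbeats 1000000

lemma filter_down (n : ℕ) (P : ℕ → Prop) [DecidablePred P]
    (h : ∀ i j, i ≤ j → j < n → P j → P i) :
    ∀ i < n, (P i ↔ i < ((range n).filter P).card) := by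
  intro i hi
  set u := ((range n).filter P).card with hu
  constructor
  · intro hPi
    have hsub : range (i+1) ⊆ (range n).filter P := by
      intro j hj
      simp only [mem_range] at hj
      simp only [mem_filter, mem_range]
      exact ⟨by omega, h j i (by omega) hi hPi⟩
    have := Finset.card_le_card hsub
    simpa using this
  · intro hlt
    by_contra hPi
    have hsub : (range n).filter P ⊆ range i := by
      intro j hj
      simp only [mem_filter, mem_range] at hj
      simp only [mem_range]
      by_contra hj2
      exact hPi (h i j (by omega) hj.1 hj.2)
    have := Finset.card_le_card hsub
    simp only [card_range] at this
    omega

lemma exists_antisym : ∀ (N : ℕ) (b : ℕ → ℤ),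
    (∀ i j, i ≤ j → j < N → b j ≤ b i) →
    (∑ i ∈ range N, b i = 0) →
    (∀ k, k ≤ N → ∑ i ∈ range k, b i ≤ (k:ℤ) * ((N:ℤ) - k)) →
    ∃ f : ℕ → ℕ → ℤ, (∀ i, f i i = 0) ∧ (∀ i j, f j i = - f i j) ∧
      (∀ i j, -1 ≤ f i j ∧ f i j ≤ 1) ∧ (∀ i < N, ∑ j ∈ range N, f i j = b i) := by
  intro N
  induction N with
  | zero =>
    intro b _ _ _
    exact ⟨fun _ _ => 0, by simp, by simp, by simp, by omega⟩
  | succ n ih =>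
    intro b hmono hsum hcond
    by_cases hbn : b n = 0
    · -- all entries are zero
      have hnonneg : ∀ i ∈ range (n+1), 0 ≤ b i := by
        intro i hi
        have := hmono i n (by simp at hi; omega) (by omega)
        omega
      have hall : ∀ i ∈ range (n+1), b i = 0 :=
        (Finset.sum_eq_zero_iff_of_nonneg hnonneg).mp hsum
      refine ⟨fun _ _ => 0, by simp, by simp, by simp, fun i hi => ?_⟩
      simp [hall i (mem_range.mpr hi)]
    · -- b n < 0
      have hbn_le : b n ≤ 0 := by
        have h1 : ∀ i ∈ range (n+1), b n ≤ b i := by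
          intro i hi
          exact hmono i n (by simp at hi; omega) (by omega)
        have h2 : ((n:ℤ)+1) * b n ≤ 0 := by
          calc ((n:ℤ)+1) * b n = ∑ _i ∈ range (n+1), b n := by
                simp [mul_comm]
            _ ≤ ∑ i ∈ range (n+1), b i := Finset.sum_le_sum h1
            _ = 0 := hsum
        nlinarith [Int.natCast_nonneg n]
      set M : ℤ := -b n with hM
      have hM0 : 0 < M := by omega
      set m : ℕ := M.toNat with hm
      have hmZ : (m:ℤ) = M := Int.toNat_of_nonneg (by omega)
      have hSn : ∑ i ∈ range n, b i = M := by
        have := Finset.sum_range_succ b n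
        rw [this] at hsum; omega
      have hmn : m ≤ n := by
        have := hcond n (by omega)
        rw [hSn] at this
        have : M ≤ n := by push_cast at this; nlinarith
        omega
      have hm1 : 1 ≤ m := by omega
      set t : ℤ := b (m-1) with ht
      set u : ℕ := ((range n).filter (fun i => t < b i)).card with hudef
      set w : ℕ := ((range n).filter (fun i => t ≤ b i)).card with hwdef
      have hu : ∀ i < n, (t < b i ↔ i < u) :=
        filter_down n _ (fun i j hij hj hP => lt_of_lt_of_le hP (hmono i j hij (by omega)))
      have hw : ∀ i < n, (t ≤ b i ↔ i < w) :=
        filter_down n _ (fun i j hij hj hP => le_trans hP (hmono i j hij (by omega)))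
      have hwn : w ≤ n := by
        have := Finset.card_filter_le (range n) (fun i => t ≤ b i)
        simpa using this
      have hum : u < m := by
        have h1 : ¬ (t < b (m-1)) := by omega
        have h2 := hu (m-1) (by omega)
        omega
      have hmw : m ≤ w := by
        have h1 : t ≤ b (m-1) := le_refl _
        have h2 := hw (m-1) (by omega)
        omega
      set s : ℕ := m - u with hs
      set T : Finset ℕ := range u ∪ Ico (w - s) w with hT
      have hmemT : ∀ i, i ∈ T ↔ (i < u ∨ (w - s ≤ i ∧ i < w)) := by
        intro i; simp [hT, mem_union, mem_range, mem_Ico]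
      have hTsub : T ⊆ range n := by
        intro i hi
        rw [hmemT] at hi
        simp only [mem_range]
        omega
      have hcardT : T.card = m := by
        rw [hT, Finset.card_union_of_disjoint]
        · rw [card_range, Nat.card_Ico]; omega
        · rw [Finset.disjoint_left]
          intro a ha hb
          simp only [mem_range] at ha
          simp only [mem_Ico] at hb
          omega
      set b' : ℕ → ℤ := fun i => b i - (if i ∈ T then 1 else 0) with hb'
      have hbt : ∀ l, u ≤ l → l < w → b l = t := by
        intro l h1 h2
        have hln : l < n := by omega
        have ha : ¬ t < b l := by have := hu l hln; omega
        have hb : t ≤ b l := by have := hw l hln; omega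
        omega
      -- monotonicity of b'
      have hb'mono : ∀ i j, i ≤ j → j < n → b' j ≤ b' i := by
        intro i j hij hj
        by_cases hiT : i ∈ T
        · by_cases hjT : j ∈ T
          · simp only [hb', hiT, hjT, if_pos]
            have := hmono i j hij (by omega); omega
          · simp only [hb', if_pos hiT, if_neg hjT]
            rw [hmemT] at hiT hjT
            push_neg at hjT
            rcases hiT with h | h
            · have h1 : t < b i := (hu i (by omega)).mpr h
              have h2 : ¬ t < b j := by
                intro hc
                exact absurd ((hu j hj).mp hc) (by omega)
              omega
            · have hbi : b i = t := hbt i (by omega) h.2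
              have hjw : w ≤ j := hjT.2 (by omega)
              have : ¬ t ≤ b j := by
                intro hc
                have := (hw j hj).mp hc; omega
              omega
        · have h1 : b' j ≤ b j := by simp only [hb']; split <;> omega
          have h2 : b' i = b i := by simp only [hb', if_neg hiT]; ring
          have := hmono i j hij (by omega)
          omega
      have hsum_ind : ∀ k, T ⊆ range k → ∑ i ∈ range k, (if i ∈ T then (1:ℤ) else 0) = m := by
        intro k hk
        rw [Finset.sum_ite_mem, Finset.inter_eq_right.mpr hk, Finset.sum_const, hcardT]
        simp
      have hsum' : ∑ i ∈ range n, b' i = 0 := by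
        simp only [hb']
        rw [Finset.sum_sub_distrib, hSn, hsum_ind n hTsub]
        omega
      have hcond' : ∀ k, k ≤ n → ∑ i ∈ range k, b' i ≤ (k:ℤ) * ((n:ℤ) - k) := by
        intro k hk
        have hsplit : ∑ i ∈ range k, b' i
            = (∑ i ∈ range k, b i) - ∑ i ∈ range k, (if i ∈ T then (1:ℤ) else 0) := by
          simp only [hb']; rw [Finset.sum_sub_distrib]
        by_cases hA : ∀ i < k, i ∈ T
        · have hind : ∑ i ∈ range k, (if i ∈ T then (1:ℤ) else 0) = k := by
            rw [Finset.sum_congr rfl (fun i hi => if_pos (hA i (mem_range.mp hi)))]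
            simp
          have hck := hcond k (by omega)
          rw [hsplit, hind]
          push_cast at hck ⊢
          nlinarith
        · push_neg at hA
          obtain ⟨i, hik, hiT⟩ := hA
          by_cases hB : ∃ j, k ≤ j ∧ j < n ∧ j ∈ T
          · obtain ⟨j, hkj, hjn, hjT⟩ := hB
            have hui : u ≤ i := by
              rw [hmemT] at hiT; push_neg at hiT; omega
            have huk : u < k := by omega
            have hjw : w - s ≤ j ∧ j < w := by
              rw [hmemT] at hjT
              rcases hjT with h | h
              · omega
              · exact h
            have hkw : k < w := by omega
            -- sums over blocks
            have e1 : ∑ x ∈ range k, b x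
                = (∑ x ∈ range u, b x) + ((k:ℤ) - u) * t := by
              rw [← Finset.sum_range_add_sum_Ico b huk.le]
              congr 1
              rw [Finset.sum_congr rfl (fun l hl => hbt l (mem_Ico.mp hl).1
                (by have := (mem_Ico.mp hl).2; omega))]
              rw [Finset.sum_const, Nat.card_Ico, nsmul_eq_mul]
              push_cast [Nat.cast_sub huk.le]
              ring
            have e2 : ∑ x ∈ range w, b x
                = (∑ x ∈ range u, b x) + ((w:ℤ) - u) * t := by
              rw [← Finset.sum_range_add_sum_Ico b (by omega : u ≤ w)]
              congr 1
              rw [Finset.sum_congr rfl (fun l hl => hbt l (mem_Ico.mp hl).1 (mem_Ico.mp hl).2)]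
              rw [Finset.sum_const, Nat.card_Ico, nsmul_eq_mul]
              push_cast [Nat.cast_sub (by omega : u ≤ w)]
              ring
            have hSu := hcond u (by omega)
            have hSw := hcond w (by omega)
            -- c ≥ u
            have hc_ge : (u:ℤ) ≤ ∑ x ∈ range k, (if x ∈ T then (1:ℤ) else 0) := by
              have : ∑ x ∈ range k, (if x ∈ T then (1:ℤ) else 0)
                  ≥ ∑ x ∈ range u, (1:ℤ) := by
                rw [← Finset.sum_range_add_sum_Ico
                  (fun x => if x ∈ T then (1:ℤ) else 0) huk.le]
                have h1 : ∑ x ∈ range u, (if x ∈ T then (1:ℤ) else 0)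
                    = ∑ x ∈ range u, (1:ℤ) := by
                  refine Finset.sum_congr rfl (fun x hx => if_pos ?_)
                  rw [hmemT]; left; exact mem_range.mp hx
                rw [h1]
                have h2 : (0:ℤ) ≤ ∑ x ∈ Ico u k, (if x ∈ T then (1:ℤ) else 0) := by
                  apply Finset.sum_nonneg; intro x _; split <;> norm_num
                linarith
              simpa using this
            -- the chord bound
            have hslack : ∑ x ∈ range k, b x
                ≤ (k:ℤ) * ((n:ℤ) + 1 - k) - ((k:ℤ) - u) * ((w:ℤ) - k) := by
              have hprod1 : 0 ≤ ((w:ℤ) - k) * ((u:ℤ)*((n:ℤ)+1-(u:ℤ)) - ∑ x ∈ range u, b x) := by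
                apply mul_nonneg
                · have : (k:ℤ) < w := by exact_mod_cast hkw
                  linarith
                · push_cast at hSu; linarith
              have hprod2 : 0 ≤ ((k:ℤ) - u) * ((w:ℤ)*((n:ℤ)+1-(w:ℤ)) - ∑ x ∈ range w, b x) := by
                apply mul_nonneg
                · have : (u:ℤ) < k := by exact_mod_cast huk
                  linarith
                · push_cast at hSw; linarith
              have hwu : (0:ℤ) < (w:ℤ) - u := by
                have : (u:ℤ) < w := by exact_mod_cast (by omega : u < w)
                linarith
              have hident : ((w:ℤ) - u) * ((k:ℤ)*((n:ℤ)+1-k) - ((k:ℤ)-u)*((w:ℤ)-k)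
                    - ∑ x ∈ range k, b x)
                  = ((w:ℤ)-k) * ((u:ℤ)*((n:ℤ)+1-(u:ℤ)) - ∑ x ∈ range u, b x)
                    + ((k:ℤ)-u) * ((w:ℤ)*((n:ℤ)+1-(w:ℤ)) - ∑ x ∈ range w, b x) := by
                rw [e1, e2]; ring
              have h0 : 0 ≤ ((w:ℤ) - u) * ((k:ℤ)*((n:ℤ)+1-k) - ((k:ℤ)-u)*((w:ℤ)-k)
                  - ∑ x ∈ range k, b x) := by
                rw [hident]; exact add_nonneg hprod1 hprod2
              nlinarith [h0, hwu]
            have hkw' : (k:ℤ) < w := by exact_mod_cast hkw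
            have huk' : (u:ℤ) < k := by exact_mod_cast huk
            have hquad : (k:ℤ) - u ≤ ((k:ℤ) - u) * ((w:ℤ) - k) := by
              nlinarith
            rw [hsplit]
            have hexp : (k:ℤ)*((n:ℤ)+1-k) = (k:ℤ)*((n:ℤ)-k) + k := by ring
            linarith [hc_ge, hslack, hquad]
          · -- T entirely inside range k
            push_neg at hB
            have hTk : T ⊆ range k := by
              intro j hj
              have hjn := mem_range.mp (hTsub hj)
              rw [mem_range]
              by_contra hc
              exact (hB j (by omega) hjn) hj
            have hmk : m < k := by
              have hsub : T ⊆ (range k).erase i := by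
                intro j hj
                rw [Finset.mem_erase]
                exact ⟨fun hc => hiT (hc ▸ hj), hTk hj⟩
              have := Finset.card_le_card hsub
              rw [Finset.card_erase_of_mem (mem_range.mpr hik), card_range, hcardT] at this
              omega
            -- tail bound
            have htail : ∑ x ∈ range k, b' x = - ∑ x ∈ Ico k n, b' x := by
              have := Finset.sum_range_add_sum_Ico b' hk
              rw [hsum'] at this
              linarith
            have hbtail : ∀ x ∈ Ico k n, -M ≤ b' x := by
              intro x hx
              have hx' := mem_Ico.mp hx
              have hxT : x ∉ T := fun hc => (hB x hx'.1 hx'.2) hc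
              have h1 : b' x = b x := by simp only [hb', if_neg hxT]; ring
              have h2 := hmono x n hx'.2.le (by omega)
              omega
            have hlb : ((n:ℤ) - k) * (-M) ≤ ∑ x ∈ Ico k n, b' x := by
              have := Finset.sum_le_sum hbtail
              rw [Finset.sum_const, Nat.card_Ico, nsmul_eq_mul] at this
              push_cast [Nat.cast_sub hk] at this
              linarith
            rw [htail]
            have hkn : (k:ℤ) ≤ n := by exact_mod_cast hk
            have hmk' : M < k := by
              have : (m:ℤ) < k := by exact_mod_cast hmk
              omega
            have hnk : (0:ℤ) ≤ (n:ℤ) - k := by linarith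
            nlinarith [hlb, mul_le_mul_of_nonneg_left hmk'.le hnk]
      -- apply induction hypothesis
      obtain ⟨f', hf1, hf2, hf3, hf4⟩ := ih b' hb'mono hsum' hcond'
      classical
      set F : ℕ → ℕ → ℤ := fun i j =>
        if i < n ∧ j < n then f' i j
        else if i < n ∧ j = n then (if i ∈ T then (1:ℤ) else 0)
        else if i = n ∧ j < n then -(if j ∈ T then (1:ℤ) else 0)
        else 0 with hFdef
      have hF : ∀ i j, F i j =
          (if i < n ∧ j < n then f' i j
          else if i < n ∧ j = n then (if i ∈ T then (1:ℤ) else 0)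
          else if i = n ∧ j < n then -(if j ∈ T then (1:ℤ) else 0)
          else 0) := fun i j => rfl
      refine ⟨F, ?_, ?_, ?_, ?_⟩
      · intro i
        rw [hF]
        by_cases h : i < n
        · simp [h, hf1 i]
        · split_ifs <;> omega
      · intro i j
        rw [hF, hF]
        by_cases hi : i < n <;> by_cases hj : j < n
        · simp [hi, hj, hf2 i j]
        · by_cases hjn : j = n
          · subst hjn
            simp [hi, lt_irrefl]
          · split_ifs <;> omega
        · by_cases hin : i = n
          · subst hin
            simp [hj, lt_irrefl]
          · split_ifs <;> omega
        · split_ifs <;> omega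
      · intro i j
        rw [hF]
        split_ifs <;> first | exact hf3 i j | norm_num
      · intro i hi
        by_cases hin : i < n
        · rw [Finset.sum_range_succ]
          have h1 : ∀ j ∈ range n, F i j = f' i j := by
            intro j hj
            rw [hF]
            simp [hin, mem_range.mp hj]
          rw [Finset.sum_congr rfl h1, hf4 i hin]
          have h2 : F i n = (if i ∈ T then (1:ℤ) else 0) := by
            rw [hF]; simp [hin]
          rw [h2]
          simp only [hb']
          split <;> ring
        · have hieq : i = n := by omega
          rw [hieq, Finset.sum_range_succ]
          have h1 : ∀ j ∈ range n, F n j = -(if j ∈ T then (1:ℤ) else 0) := by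
            intro j hj
            rw [hF]
            simp [mem_range.mp hj]
          rw [Finset.sum_congr rfl h1]
          have h2 : F n n = 0 := by rw [hF]; simp
          rw [h2, Finset.sum_neg_distrib, hsum_ind n hTsub]
          omega

lemma sum_filter_lt (n k : ℕ) (hk : k ≤ n) (b : Fin n → ℤ) (g : ℕ → ℤ)
    (hg : ∀ i : Fin n, g i = b i) :
    ∑ i ∈ Finset.univ.filter (fun i : Fin n => (i:ℕ) < k), b i = ∑ i ∈ range k, g i := by
  rw [Finset.sum_filter]
  have h1 : ∑ i : Fin n, (if (i:ℕ) < k then b i else 0)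
      = ∑ i ∈ range n, (if i < k then g i else 0) := by
    rw [← Fin.sum_univ_eq_sum_range (fun m => if m < k then g m else 0) n]
    refine Finset.sum_congr rfl fun i _ => ?_
    simp only [hg i]
  rw [h1, ← Finset.sum_filter]
  congr 1
  ext a
  simp only [mem_filter, mem_range]
  omega

lemma card_filter_lt (n k : ℕ) (hk : k ≤ n) :
    (Finset.univ.filter (fun i : Fin n => (i:ℕ) < k)).card = k := by
  have h := sum_filter_lt n k hk (fun _ => (1:ℤ)) (fun _ => 1) (fun _ => rfl)
  simp only [Finset.sum_const, nsmul_eq_mul, mul_one, card_range] at h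
  exact_mod_cast h

theorem stmt11_fwd (n : ℕ) (hn : 1 ≤ n) (b : Fin n → ℤ)
    (A : Fin n → Fin n → ℕ) (h : IsImbalanceSeq n 1 A b) :
    ((∀ k : ℕ, 1 ≤ k → k ≤ n → psum b k ≤ (k : ℤ) * ((n : ℤ) - k)) ∧
        psum b n = (n : ℤ) * ((n : ℤ) - n)) := by
  obtain ⟨⟨hloop, hbound⟩, σ, hb⟩ := h
  have himb : ∀ v, imbalance A v = ∑ j, ((A v j : ℤ) - (A j v : ℤ)) := by
    intro v; rw [imbalance, Finset.sum_sub_distrib]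
  have hg1 : ∀ v j : Fin n, (A v j : ℤ) - A j v ≤ 1 := by
    intro v j
    by_cases h : v = j
    · subst h; simp [hloop v]
    · have h1 := hbound v j h
      have h2 : ((A v j : ℕ) : ℤ) + A j v ≤ 1 := by exact_mod_cast h1
      have h3 : (0:ℤ) ≤ (A j v : ℤ) := by positivity
      linarith
  have key : ∀ S : Finset (Fin n),
      ∑ v ∈ S, imbalance A v ≤ (S.card : ℤ) * ((n:ℤ) - S.card) := by
    intro S
    have hsplit : ∑ v ∈ S, imbalance A v
        = (∑ v ∈ S, ∑ j ∈ S, ((A v j : ℤ) - A j v))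
          + ∑ v ∈ S, ∑ j ∈ Sᶜ, ((A v j : ℤ) - A j v) := by
      rw [← Finset.sum_add_distrib]
      refine Finset.sum_congr rfl fun v _ => ?_
      rw [himb v, ← Finset.sum_add_sum_compl S (fun j => (A v j : ℤ) - A j v)]
    have hzero : (∑ v ∈ S, ∑ j ∈ S, ((A v j : ℤ) - A j v)) = 0 := by
      have hd : (∑ v ∈ S, ∑ j ∈ S, ((A v j : ℤ) - A j v))
          = (∑ v ∈ S, ∑ j ∈ S, (A v j : ℤ)) - ∑ v ∈ S, ∑ j ∈ S, (A j v : ℤ) := by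
        rw [← Finset.sum_sub_distrib]
        exact Finset.sum_congr rfl fun v _ => by rw [Finset.sum_sub_distrib]
      have hc := Finset.sum_comm (s := S) (t := S) (f := fun v j => ((A j v : ℤ)))
      rw [hd, hc]
      simp
    have hb2 : ∑ v ∈ S, ∑ j ∈ Sᶜ, ((A v j:ℤ) - A j v)
        ≤ ∑ v ∈ S, ∑ j ∈ Sᶜ, (1:ℤ) :=
      Finset.sum_le_sum fun v _ => Finset.sum_le_sum fun j _ => hg1 v j
    have hcc : ((Sᶜ : Finset (Fin n)).card : ℤ) = (n:ℤ) - S.card := by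
      rw [Finset.card_compl, Nat.cast_sub (by simpa using Finset.card_le_univ S)]
      simp
    rw [hsplit, hzero, zero_add]
    calc ∑ v ∈ S, ∑ j ∈ Sᶜ, ((A v j:ℤ) - A j v) ≤ ∑ v ∈ S, ∑ j ∈ Sᶜ, (1:ℤ) := hb2
      _ = (S.card : ℤ) * ((Sᶜ : Finset (Fin n)).card : ℤ) := by
          simp [Finset.sum_const, nsmul_eq_mul, mul_comm]
      _ = (S.card : ℤ) * ((n:ℤ) - S.card) := by rw [hcc]
  constructor
  · intro k hk1 hkn
    have hps : psum b k = ∑ i ∈ Finset.univ.filter (fun i : Fin n => (i:ℕ) < k),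
        imbalance A (σ i) := by
      rw [psum]
      exact Finset.sum_congr rfl fun i _ => hb i
    set Fk := Finset.univ.filter (fun i : Fin n => (i:ℕ) < k) with hFk
    have himg : ∑ i ∈ Fk, imbalance A (σ i) = ∑ v ∈ Fk.image σ, imbalance A v := by
      rw [Finset.sum_image (fun x _ y _ hxy => σ.injective hxy)]
    have hcard : (Fk.image σ).card = k := by
      rw [Finset.card_image_of_injective _ σ.injective, hFk, card_filter_lt n k hkn]
    have := key (Fk.image σ)
    rw [hcard] at this
    rw [hps, himg]
    exact this
  · have hps : psum b n = ∑ v : Fin n, imbalance A v := by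
      rw [psum]
      have hfull : Finset.univ.filter (fun i : Fin n => (i:ℕ) < n) = Finset.univ := by
        ext i; simp [i.isLt]
      rw [hfull]
      rw [Finset.sum_congr rfl fun i _ => hb i]
      exact Equiv.sum_comp σ (imbalance A)
    have hzero : ∑ v : Fin n, imbalance A v = 0 := by
      rw [Finset.sum_congr rfl fun v _ => himb v]
      have hd : (∑ v : Fin n, ∑ j : Fin n, ((A v j : ℤ) - A j v))
          = (∑ v : Fin n, ∑ j : Fin n, (A v j : ℤ))
            - ∑ v : Fin n, ∑ j : Fin n, (A j v : ℤ) := by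
        rw [← Finset.sum_sub_distrib]
        exact Finset.sum_congr rfl fun v _ => by rw [Finset.sum_sub_distrib]
      have hc := Finset.sum_comm (s := (univ : Finset (Fin n))) (t := univ) (f := fun v j => ((A j v : ℤ)))
      rw [hd, hc]
      simp
    rw [hps, hzero]
    ring

theorem stmt11_bwd (n : ℕ) (hn : 1 ≤ n) (b : Fin n → ℤ) (hanti : Antitone b)
    (hcond : ∀ k : ℕ, 1 ≤ k → k ≤ n → psum b k ≤ (k : ℤ) * ((n : ℤ) - k))
    (heq : psum b n = (n : ℤ) * ((n : ℤ) - n)) :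
    ∃ A : Fin n → Fin n → ℕ, IsImbalanceSeq n 1 A b := by
  classical
  set bb : ℕ → ℤ := fun i => if h : i < n then b ⟨i, h⟩ else 0 with hbb
  have hgb : ∀ i : Fin n, bb (i:ℕ) = b i := by
    intro i
    simp only [hbb, dif_pos i.isLt]
  have hpsum : ∀ k, k ≤ n → psum b k = ∑ i ∈ range k, bb i := by
    intro k hk
    rw [psum]
    exact sum_filter_lt n k hk b bb hgb
  have hmono : ∀ i j, i ≤ j → j < n → bb j ≤ bb i := by
    intro i j hij hj
    have hi : i < n := lt_of_le_of_lt hij hj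
    simp only [hbb, dif_pos hj, dif_pos hi]
    exact hanti (show (⟨i, hi⟩ : Fin n) ≤ ⟨j, hj⟩ from hij)
  have heq0 : psum b n = 0 := by rw [heq]; ring
  have hsum0 : ∑ i ∈ range n, bb i = 0 := by rw [← hpsum n le_rfl]; exact heq0
  have hcondN : ∀ k, k ≤ n → ∑ i ∈ range k, bb i ≤ (k:ℤ) * ((n:ℤ) - k) := by
    intro k hk
    rcases Nat.eq_zero_or_pos k with h0 | h1
    · subst h0; simp
    · rw [← hpsum k hk]; exact hcond k h1 hk
  obtain ⟨f, hfd, hfa, hfb, hfs⟩ := exists_antisym n bb hmono hsum0 hcondN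
  set A : Fin n → Fin n → ℕ := fun i j => (f (i:ℕ) (j:ℕ)).toNat with hA
  have hAval : ∀ i j : Fin n, A i j = (f (i:ℕ) (j:ℕ)).toNat := fun _ _ => rfl
  refine ⟨A, ⟨⟨?_, ?_⟩, Equiv.refl _, ?_⟩⟩
  · intro i
    rw [hAval]
    simp [hfd (i:ℕ)]
  · intro i j _
    rw [hAval, hAval]
    have h1 := hfb (i:ℕ) (j:ℕ)
    have h2 := hfa (i:ℕ) (j:ℕ)
    omega
  · intro i
    simp only [Equiv.refl_apply]
    rw [imbalance, ← Finset.sum_sub_distrib]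
    have h3 : ∀ j : Fin n, ((A i j : ℤ)) - ((A j i : ℤ)) = f (i:ℕ) (j:ℕ) := by
      intro j
      rw [hAval, hAval]
      have h1 := hfb (i:ℕ) (j:ℕ)
      have h2 := hfa (i:ℕ) (j:ℕ)
      omega
    rw [Finset.sum_congr rfl (fun j _ => h3 j)]
    have h4 : ∑ j : Fin n, f (i:ℕ) (j:ℕ) = ∑ j ∈ range n, f (i:ℕ) j :=
      Fin.sum_univ_eq_sum_range _ n
    rw [h4, hfs (i:ℕ) i.isLt, hgb i]

/-- Characterization of imbalance sequences of simple digraphs (the case r = 1):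
a non-increasing integer sequence is realizable iff $\sum_{i=1}^k b_i \le k(n-k)$ for
all k, with equality at k = n. -/
theorem stmt11 (n : ℕ) (hn : 1 ≤ n) (b : Fin n → ℤ) (hanti : Antitone b) :
    (∃ A : Fin n → Fin n → ℕ, IsImbalanceSeq n 1 A b) ↔
      ((∀ k : ℕ, 1 ≤ k → k ≤ n → psum b k ≤ (k : ℤ) * ((n : ℤ) - k)) ∧
        psum b n = (n : ℤ) * ((n : ℤ) - n)) := by
  constructor
  · rintro ⟨A, hA⟩
    exact stmt11_fwd n hn b A hA
  · rintro ⟨h1, h2⟩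
    exact stmt11_bwd n hn b hanti h1 h2
end
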